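/- arXiv:1503.08082 — 3 statements merged into one kernel-verified Lean document; each statement's English description precedes it below -/
import Mathlib

section
/- Let V be a nonnegative random variable and G a standard Gaussian random variable independent of V, and for τ > 0 set Z_τ := -(1/2)·V·τ + √(V·τ)·G. Then for every k ∈ ℝ and τ > 0, E[(exp(Z_τ) - e^k)^+] = E[BS(k, V, τ)]. -/
open MeasureTheory ProbabilityTheory

/-- The standard normal cumulative distribution function. -/
noncomputable def Phi (x : ℝ) : ℝ :=
  ∫ s in Set.Iic x, Real.exp (-(s ^ 2) / 2) / Real.sqrt (2 * Real.pi)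

/-- The Black–Scholes call price, for strictly positive variance `w`. -/
noncomputable def BS (k w T : ℝ) : ℝ :=
  Phi (-k / Real.sqrt (w * T) + Real.sqrt (w * T) / 2)
    - Real.exp k * Phi (-k / Real.sqrt (w * T) - Real.sqrt (w * T) / 2)

/-- The Black–Scholes call price extended by its `w = 0` limit `max (1 - e^k) 0`. -/
noncomputable def BSe (k w T : ℝ) : ℝ :=
  if w = 0 then max (1 - Real.exp k) 0 else BS k w T

noncomputable def phi (s : ℝ) : ℝ := Real.exp (-(s ^ 2) / 2) / Real.sqrt (2 * Real.pi)

lemma phi_nonneg (s : ℝ) : 0 ≤ phi s := by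
  unfold phi; positivity

lemma phi_integrable : Integrable phi := by
  have h : Integrable (fun s : ℝ => Real.exp (-(1/2 : ℝ) * s ^ 2)) :=
    integrable_exp_neg_mul_sq (by norm_num)
  have : phi = fun s => Real.exp (-(1/2 : ℝ) * s ^ 2) * (Real.sqrt (2 * Real.pi))⁻¹ := by
    funext s; unfold phi; rw [div_eq_mul_inv]; ring_nf
  rw [this]
  exact h.mul_const _

lemma phi_even (s : ℝ) : phi (-s) = phi s := by unfold phi; rw [neg_pow]; ring_nf

lemma integral_phi_Ioi (c : ℝ) : ∫ s in Set.Ioi c, phi s = Phi (-c) := by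
  have : ∫ s in Set.Ioi c, phi s = ∫ s in Set.Ioi c, phi (-s) := by
    refine setIntegral_congr_fun measurableSet_Ioi fun s _ => (phi_even s).symm
  rw [this, integral_comp_neg_Ioi]
  rfl

lemma integral_phi_shift_Ioi (d σ : ℝ) :
    ∫ g in Set.Ioi d, phi (g - σ) = ∫ x in Set.Ioi (d - σ), phi x := by
  have h1 : ∫ g in Set.Ioi d, phi (g - σ)
      = ∫ g, (Set.Ioi (d - σ)).indicator phi (g - σ) := by
    rw [← integral_indicator measurableSet_Ioi]
    congr 1; funext g
    by_cases hg : g ∈ Set.Ioi d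
    · rw [Set.indicator_of_mem hg, Set.indicator_of_mem (by simpa using sub_lt_sub_right hg σ)]
    · rw [Set.indicator_of_notMem hg, Set.indicator_of_notMem]
      simp only [Set.mem_Ioi, not_lt] at hg ⊢
      exact sub_le_sub_right hg σ
  rw [h1, ← integral_indicator measurableSet_Ioi]
  have := integral_add_right_eq_self (μ := volume) ((Set.Ioi (d - σ)).indicator phi) (-σ)
  simpa [sub_eq_add_neg] using this

lemma phi_mul_exp (σ g : ℝ) : phi g * Real.exp (σ * g - σ^2/2) = phi (g - σ) := by
  unfold phi
  rw [div_mul_eq_mul_div, ← Real.exp_add]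
  congr 2
  ring

lemma BS_core (k σ : ℝ) (hσ : 0 < σ) :
    ∫ g, phi g * max (Real.exp (σ * g - σ^2/2) - Real.exp k) 0
      = Phi (-k/σ + σ/2) - Real.exp k * Phi (-k/σ - σ/2) := by
  obtain ⟨d, hd⟩ : ∃ d : ℝ, d = k/σ + σ/2 := ⟨_, rfl⟩
  have hshift : Integrable (fun g => phi (g - σ)) := phi_integrable.comp_sub_right σ
  have hstep1 : (fun g => phi g * max (Real.exp (σ * g - σ^2/2) - Real.exp k) 0)
      = (Set.Ioi d).indicator (fun g => phi (g - σ) - Real.exp k * phi g) := by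
    funext g
    by_cases hg : g ∈ Set.Ioi d
    · rw [Set.indicator_of_mem hg]
      have hdg : d < g := hg
      have hgt : k < σ * g - σ^2/2 := by
        have h1 : d * σ < g * σ := mul_lt_mul_of_pos_right hdg hσ
        have h2 : d * σ = k + σ^2/2 := by rw [hd, add_mul, div_mul_cancel₀ _ hσ.ne']; ring
        linarith [mul_comm g σ]
      rw [max_eq_left (sub_nonneg.2 (le_of_lt (Real.exp_lt_exp.2 hgt)))]
      rw [mul_sub, phi_mul_exp]
      ring
    · rw [Set.indicator_of_notMem hg]
      have hdg : g ≤ d := not_lt.1 hg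
      have hle : σ * g - σ^2/2 ≤ k := by
        have h1 : g * σ ≤ d * σ := mul_le_mul_of_nonneg_right hdg hσ.le
        have h2 : d * σ = k + σ^2/2 := by rw [hd, add_mul, div_mul_cancel₀ _ hσ.ne']; ring
        linarith [mul_comm g σ]
      rw [max_eq_right (sub_nonpos.2 (Real.exp_le_exp.2 hle)), mul_zero]
  rw [hstep1, integral_indicator measurableSet_Ioi]
  rw [integral_sub (hshift.integrableOn) ((phi_integrable.const_mul _).integrableOn)]
  rw [integral_const_mul, integral_phi_shift_Ioi, integral_phi_Ioi, integral_phi_Ioi]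
  have e1 : -(d - σ) = -k/σ + σ/2 := by rw [hd]; ring
  have e2 : -d = -k/σ - σ/2 := by rw [hd]; ring
  rw [e1, e2]

lemma phi_continuous : Continuous phi := by unfold phi; fun_prop

lemma gaussianPDFReal_eq_phi (x : ℝ) : gaussianPDFReal 0 1 x = phi x := by
  unfold gaussianPDFReal phi
  push_cast
  rw [mul_one, sub_zero, mul_one, div_eq_mul_inv _ (Real.sqrt (2*Real.pi)), mul_comm]

lemma BS_integrable (k σ : ℝ) :
    Integrable (fun g => phi g * max (Real.exp (σ * g - σ^2/2) - Real.exp k) 0) := by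
  refine (phi_integrable.comp_sub_right σ).mono ?_ ?_
  · have hc : Continuous (fun g => phi g * max (Real.exp (σ * g - σ^2/2) - Real.exp k) 0) := by
      apply phi_continuous.mul
      exact ((Real.continuous_exp.comp (by fun_prop)).sub continuous_const).max continuous_const
    exact hc.aestronglyMeasurable
  · filter_upwards with g
    rw [Real.norm_eq_abs, Real.norm_eq_abs,
      abs_of_nonneg (mul_nonneg (phi_nonneg g) (le_max_right _ _)),
      abs_of_nonneg (phi_nonneg _)]
    calc phi g * max (Real.exp (σ * g - σ^2/2) - Real.exp k) 0
        ≤ phi g * Real.exp (σ * g - σ^2/2) :=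
          mul_le_mul_of_nonneg_left
            (max_le (sub_le_self _ (Real.exp_pos k).le) (Real.exp_pos _).le) (phi_nonneg g)
      _ = phi (g - σ) := phi_mul_exp σ g

lemma gaussian_lintegral_eq (k τ v : ℝ) (hτ : 0 < τ) (hv : 0 ≤ v) :
    ∫⁻ g, ENNReal.ofReal
        (max (Real.exp (-(1/2) * v * τ + Real.sqrt (v * τ) * g) - Real.exp k) 0)
        ∂(gaussianReal 0 1)
      = ENNReal.ofReal (BSe k v τ) := by
  rcases eq_or_lt_of_le hv with h0 | hv
  · simp only [← h0, BSe, if_pos rfl, zero_mul, Real.sqrt_zero, mul_zero, neg_zero, zero_add,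
      zero_mul, Real.exp_zero]
    rw [lintegral_const]
    simp
  · have hvτ : 0 < v * τ := mul_pos hv hτ
    have hσ : 0 < Real.sqrt (v * τ) := Real.sqrt_pos.2 hvτ
    have hexp : ∀ g : ℝ, -(1/2) * v * τ + Real.sqrt (v * τ) * g
        = Real.sqrt (v * τ) * g - (Real.sqrt (v * τ))^2 / 2 := by
      intro g; rw [Real.sq_sqrt hvτ.le]; ring
    have hmeas : Measurable fun g : ℝ => ENNReal.ofReal
        (max (Real.exp (Real.sqrt (v*τ) * g - (Real.sqrt (v*τ))^2/2) - Real.exp k) 0) := by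
      fun_prop
    simp_rw [hexp]
    rw [gaussianReal_of_var_ne_zero 0 one_ne_zero,
      lintegral_withDensity_eq_lintegral_mul _ (measurable_gaussianPDF 0 1) hmeas]
    simp only [Pi.mul_apply, gaussianPDF]
    simp_rw [gaussianPDFReal_eq_phi,
      ← ENNReal.ofReal_mul (phi_nonneg _)]
    rw [← ofReal_integral_eq_lintegral_ofReal (BS_integrable k (Real.sqrt (v*τ)))
      (Filter.Eventually.of_forall fun g => mul_nonneg (phi_nonneg g) (le_max_right _ _))]
    rw [BS_core k (Real.sqrt (v*τ)) hσ]
    unfold BSe BS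
    rw [if_neg hv.ne']

lemma Phi_monotone : Monotone Phi := by
  intro a b hab
  exact setIntegral_mono_set phi_integrable.integrableOn
    (Filter.Eventually.of_forall fun s => phi_nonneg s)
    (HasSubset.Subset.eventuallyLE (Set.Iic_subset_Iic.2 hab))

lemma Phi_measurable : Measurable Phi := Phi_monotone.measurable

lemma BSe_measurable (k τ : ℝ) : Measurable fun w => BSe k w τ := by
  unfold BSe BS
  refine Measurable.ite ?_ measurable_const ?_
  · simp only [Set.setOf_eq_eq_singleton]
    exact measurableSet_singleton 0
  · apply Measurable.sub
    · exact Phi_measurable.comp (by fun_prop)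
    · exact measurable_const.mul (Phi_measurable.comp (by fun_prop))

theorem stmt_1 {Ω : Type*} [MeasurableSpace Ω] (μ : Measure Ω) [IsProbabilityMeasure μ]
    (V G : Ω → ℝ) (hV : Measurable V) (hG : Measurable G)
    (hVnn : ∀ ω, 0 ≤ V ω)
    (hGlaw : μ.map G = gaussianReal 0 1)
    (hindep : IndepFun V G μ)
    (k τ : ℝ) (hτ : 0 < τ) :
    ∫⁻ ω, ENNReal.ofReal
        (max (Real.exp (-(1/2) * V ω * τ + Real.sqrt (V ω * τ) * G ω) - Real.exp k) 0) ∂μ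
      = ∫⁻ ω, ENNReal.ofReal (BSe k (V ω) τ) ∂μ := by
  have hpair : μ.map (fun ω => (V ω, G ω)) = (μ.map V).prod (μ.map G) :=
    (indepFun_iff_map_prod_eq_prod_map_map hV.aemeasurable hG.aemeasurable).mp hindep
  have hF : Measurable fun p : ℝ × ℝ => ENNReal.ofReal
      (max (Real.exp (-(1/2) * p.1 * τ + Real.sqrt (p.1 * τ) * p.2) - Real.exp k) 0) := by
    fun_prop
  have h1 : ∫⁻ ω, ENNReal.ofReal
      (max (Real.exp (-(1/2) * V ω * τ + Real.sqrt (V ω * τ) * G ω) - Real.exp k) 0) ∂μ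
      = ∫⁻ p : ℝ × ℝ, ENNReal.ofReal
        (max (Real.exp (-(1/2) * p.1 * τ + Real.sqrt (p.1 * τ) * p.2) - Real.exp k) 0)
        ∂((μ.map V).prod (gaussianReal 0 1)) := by
    rw [← hGlaw, ← hpair, lintegral_map hF (hV.prodMk hG)]
  rw [h1]
  haveI : IsProbabilityMeasure (μ.map V) := Measure.isProbabilityMeasure_map hV.aemeasurable
  rw [lintegral_prod _ hF.aemeasurable]
  have hae : ∀ᵐ x ∂(μ.map V), 0 ≤ x := by
    rw [MeasureTheory.ae_map_iff hV.aemeasurable (measurableSet_Ici (a := (0:ℝ)))]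
    exact Filter.Eventually.of_forall hVnn
  have h2 : ∫⁻ x, (∫⁻ y, ENNReal.ofReal
      (max (Real.exp (-(1/2) * x * τ + Real.sqrt (x * τ) * y) - Real.exp k) 0)
      ∂(gaussianReal 0 1)) ∂(μ.map V)
      = ∫⁻ x, ENNReal.ofReal (BSe k x τ) ∂(μ.map V) := by
    refine lintegral_congr_ae (hae.mono fun x hx => ?_)
    exact gaussian_lintegral_eq k τ x hτ hx
  rw [h2, lintegral_map (by exact (BSe_measurable k τ).ennreal_ofReal) hV]
end

section
/- Let y > 0 and k ∈ ℝ. Then there exist constants C₀ > 0 and τ₀ > 0 such that for all τ > τ₀: | (1 - BS(k, y, τ)) · (√(2πτy)/4) · exp(yτ/8 - k/2) - 1 | ≤ C₀/τ. Equivalently, BS(k, y, τ) = 1 - (4/√(2πτy))·exp(-yτ/8 + k/2)·(1 + O(1/τ)) as τ → ∞. -/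
open MeasureTheory Real Set Filter

noncomputable def gau (s : ℝ) : ℝ := Real.exp (-(s^2)/2)

lemma gau_nonneg (s : ℝ) : 0 ≤ gau s := le_of_lt (Real.exp_pos _)

lemma gau_int : Integrable gau := by
  have h := integrable_exp_neg_mul_sq (by norm_num : (0:ℝ) < 1/2)
  convert h using 2 with x
  unfold gau; ring_nf

lemma sq_deriv (s : ℝ) : HasDerivAt (fun t : ℝ => -(t^2)/2) (-s) s := by
  have h2 := ((hasDerivAt_pow 2 s).div_const 2).neg
  simp only [neg_div]
  refine h2.congr_deriv ?_
  norm_num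

lemma gau_deriv (s : ℝ) : HasDerivAt (fun t => -gau t) (s * gau s) s := by
  simp only [gau]
  have := ((sq_deriv s).exp).neg
  refine this.congr_deriv ?_
  ring

lemma gau_tendsto : Tendsto (fun t => -gau t) atTop (nhds 0) := by
  rw [← neg_zero]
  apply Tendsto.neg
  have h : Tendsto (fun t : ℝ => Real.exp (-(t^2)/2)) atTop (nhds 0) := by
    apply Real.tendsto_exp_atBot.comp
    have : Tendsto (fun t : ℝ => t^2) atTop atTop := tendsto_pow_atTop (by norm_num)
    exact Tendsto.atBot_div_const (by norm_num) (tendsto_neg_atBot_iff.mpr this)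
  exact h

lemma int_sg {x : ℝ} (hx : 0 < x) : ∫ s in Ioi x, s * gau s = gau x := by
  have := integral_Ioi_of_hasDerivAt_of_nonneg (g := fun t => -gau t)
    (g' := fun s => s * gau s) (l := 0)
    (gau_deriv x).continuousAt.continuousWithinAt
    (fun s _ => gau_deriv s)
    (fun s hs => mul_nonneg (le_of_lt (hx.trans hs)) (gau_nonneg s))
    gau_tendsto
  simpa using this

lemma gau_div_deriv {s : ℝ} (hs : s ≠ 0) :
    HasDerivAt (fun t => -gau t / t) (gau s + gau s / s^2) s := by
  have h := (gau_deriv s).div (hasDerivAt_id s) hs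
  refine h.congr_deriv ?_
  simp only [id_eq]
  field_simp
  ring

lemma gau_div_tendsto : Tendsto (fun t => -gau t / t) atTop (nhds 0) :=
  gau_tendsto.div_atTop tendsto_id

lemma int_g2 {x : ℝ} (hx : 0 < x) :
    ∫ s in Ioi x, (gau s + gau s / s^2) = gau x / x := by
  have := integral_Ioi_of_hasDerivAt_of_nonneg (g := fun t => -gau t / t)
    (g' := fun s => gau s + gau s / s^2) (l := 0)
    (gau_div_deriv hx.ne').continuousAt.continuousWithinAt
    (fun s hs => gau_div_deriv (hx.trans hs).ne')
    (fun s hs => add_nonneg (gau_nonneg s) (div_nonneg (gau_nonneg s) (sq_nonneg s)))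
    gau_div_tendsto
  rw [this]; field_simp; ring

lemma int1 {x : ℝ} (hx : 0 < x) : IntegrableOn (fun s => s * gau s) (Ioi x) :=
  integrableOn_Ioi_deriv_of_nonneg (gau_deriv x).continuousAt.continuousWithinAt
    (fun s _ => gau_deriv s)
    (fun s hs => mul_nonneg (le_of_lt (hx.trans hs)) (gau_nonneg s)) gau_tendsto

lemma int2 {x : ℝ} (hx : 0 < x) : IntegrableOn (fun s => gau s + gau s / s^2) (Ioi x) :=
  integrableOn_Ioi_deriv_of_nonneg (gau_div_deriv hx.ne').continuousAt.continuousWithinAt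
    (fun s hs => gau_div_deriv (hx.trans hs).ne')
    (fun s hs => add_nonneg (gau_nonneg s) (div_nonneg (gau_nonneg s) (sq_nonneg s)))
    gau_div_tendsto

lemma intq {x : ℝ} (hx : 0 < x) : IntegrableOn (fun s => gau s / s^2) (Ioi x) := by
  have h := (int2 hx).sub (gau_int.integrableOn (s := Ioi x))
  apply h.congr
  filter_upwards with s
  simp

lemma tail_upper {x : ℝ} (hx : 0 < x) : ∫ s in Ioi x, gau s ≤ gau x / x := by
  calc ∫ s in Ioi x, gau s ≤ ∫ s in Ioi x, (s * gau s) / x := by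
        apply setIntegral_mono_on gau_int.integrableOn ((int1 hx).div_const x)
          measurableSet_Ioi
        intro s hs
        have hxs : x < s := hs
        rw [le_div_iff₀ hx]
        nlinarith [gau_nonneg s, hxs.le]
    _ = gau x / x := by rw [integral_div, int_sg hx]

lemma tail_q {x : ℝ} (hx : 0 < x) : ∫ s in Ioi x, gau s / s^2 ≤ gau x / x^3 := by
  calc ∫ s in Ioi x, gau s / s^2 ≤ ∫ s in Ioi x, (s * gau s) / x^3 := by
        apply setIntegral_mono_on (intq hx) ((int1 hx).div_const _) measurableSet_Ioi
        intro s hs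
        have hxs : x < s := hs
        have hs0 : 0 < s := hx.trans hxs
        rw [div_le_div_iff₀ (by positivity) (by positivity)]
        nlinarith [mul_le_mul_of_nonneg_left (pow_le_pow_left₀ hx.le hxs.le 3) (gau_nonneg s)]
    _ = gau x / x^3 := by rw [integral_div, int_sg hx]

lemma tail_lower {x : ℝ} (hx : 0 < x) :
    gau x / x - gau x / x^3 ≤ ∫ s in Ioi x, gau s := by
  have hsplit : (∫ s in Ioi x, gau s) + ∫ s in Ioi x, gau s / s^2 = gau x / x := by
    rw [← integral_add gau_int.integrableOn (intq hx), int_g2 hx]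
  have := tail_q hx
  linarith

lemma Phi_eq (t : ℝ) : Phi t = (∫ s in Iic t, gau s) / Real.sqrt (2 * Real.pi) := by
  unfold Phi
  rw [integral_div]
  congr 1

lemma gau_total : ∫ s, gau s = Real.sqrt (2 * Real.pi) := by
  have h := integral_gaussian (1/2)
  have h2 : (fun x : ℝ => Real.exp (-(1/2) * x^2)) = gau := by
    funext x; unfold gau; ring_nf
  rw [h2] at h
  rw [h, show (π/(1/2:ℝ)) = 2*π by ring]

lemma sqrt_two_pi_pos : 0 < Real.sqrt (2 * Real.pi) :=
  Real.sqrt_pos.mpr (by positivity)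

lemma one_sub_Phi (t : ℝ) :
    1 - Phi t = (∫ s in Ioi t, gau s) / Real.sqrt (2 * Real.pi) := by
  have h := intervalIntegral.integral_Iic_add_Ioi (μ := volume) (f := gau) (b := t)
    gau_int.integrableOn gau_int.integrableOn
  rw [gau_total] at h
  rw [Phi_eq]
  have hne := sqrt_two_pi_pos.ne'
  set c := Real.sqrt (2 * Real.pi) with hc
  field_simp
  linarith

lemma Phi_neg (t : ℝ) :
    Phi (-t) = (∫ s in Ioi t, gau s) / Real.sqrt (2 * Real.pi) := by
  rw [Phi_eq]
  congr 1
  have heven : ∀ s : ℝ, gau s = gau (-s) := by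
    intro s; unfold gau; ring_nf
  calc ∫ s in Iic (-t), gau s = ∫ s in Iic (-t), gau (-s) := by
        apply setIntegral_congr_fun measurableSet_Iic
        intro s _; exact heven s
    _ = ∫ s in Ioi (- -t), gau s := integral_comp_neg_Iic (-t) gau
    _ = ∫ s in Ioi t, gau s := by rw [neg_neg]

lemma aux_hD {s kk : ℝ} (hk4 : 4*|kk| + 4 ≤ s^2) : 0 < s^4 - 4*kk^2 ∧ 16*kk^2 ≤ s^4 := by
  have h0 : (0:ℝ) ≤ 4*|kk| + 4 := by positivity
  have h2 : (4*|kk|+4)*(4*|kk|+4) ≤ s^2*s^2 := mul_self_le_mul_self h0 hk4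
  constructor <;> nlinarith [sq_abs kk, abs_nonneg kk]

lemma aux_sum {s kk : ℝ} (hs0 : 0 < s) (hx1 : 0 < s/2 - kk/s) (hx2 : 0 < s/2 + kk/s)
    (hD : 0 < s^4 - 4*kk^2) :
    s/(4*(s/2 - kk/s)) + s/(4*(s/2 + kk/s)) = s^4/(s^4 - 4*kk^2) := by
  have hsne : s ≠ 0 := hs0.ne'
  have e1 : s*(s/2 - kk/s) = s^2/2 - kk := by field_simp
  have e2 : s*(s/2 + kk/s) = s^2/2 + kk := by field_simp
  have d1 : 0 < s^2/2 - kk := by nlinarith [mul_pos hs0 hx1]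
  have d2 : 0 < s^2/2 + kk := by nlinarith [mul_pos hs0 hx2]
  have n1 : (4*(s/2 - kk/s)) ≠ 0 := by positivity
  have n2 : (4*(s/2 + kk/s)) ≠ 0 := by positivity
  have m1 : (2*(s^2 - 2*kk)) ≠ 0 := (show (0:ℝ) < 2*(s^2 - 2*kk) by linarith).ne'
  have m2 : (2*(s^2 + 2*kk)) ≠ 0 := (show (0:ℝ) < 2*(s^2 + 2*kk) by linarith).ne'
  have t1 : s/(4*(s/2 - kk/s)) = s^2/(2*(s^2 - 2*kk)) := by
    rw [div_eq_div_iff n1 m1]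
    field_simp
    ring
  have t2 : s/(4*(s/2 + kk/s)) = s^2/(2*(s^2 + 2*kk)) := by
    rw [div_eq_div_iff n2 m2]
    field_simp
    ring
  rw [t1, t2, div_add_div _ _ m1 m2, div_eq_div_iff (mul_ne_zero m1 m2) hD.ne']
  ring

lemma aux_R1 {s kk : ℝ} (hD : 0 < s^4 - 4*kk^2) : 1 ≤ s^4/(s^4 - 4*kk^2) := by
  rw [le_div_iff₀ hD]; nlinarith [sq_nonneg kk]

lemma aux_R2 {s kk : ℝ} (hs0 : 0 < s) (hs4 : 16*kk^2 ≤ s^4) (hD : 0 < s^4 - 4*kk^2) :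
    s^4/(s^4 - 4*kk^2) - 1 ≤ 8*kk^2/s^4 := by
  have e : s^4/(s^4 - 4*kk^2) - 1 = 4*kk^2/(s^4 - 4*kk^2) := by field_simp; ring
  rw [e, div_le_div_iff₀ hD (by positivity)]
  nlinarith [mul_nonneg (sq_nonneg kk) (show (0:ℝ) ≤ s^4 - 16*kk^2 by linarith),
    sq_nonneg (kk^2), sq_nonneg kk]

lemma aux_cube {s x : ℝ} (hs0 : 0 < s) (hx : s/4 ≤ x) : s/(4*x^3) ≤ 16/s^2 := by
  have hx0 : 0 < x := lt_of_lt_of_le (by positivity) hx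
  have hc : (s/4)^3 ≤ x^3 := pow_le_pow_left₀ (by positivity) hx 3
  rw [div_le_div_iff₀ (by positivity) (by positivity)]
  nlinarith

lemma aux_fin1 {y τ kk : ℝ} (hy : 0 < y) (hτ1 : 1 < τ) :
    8*kk^2/(y*τ)^2 ≤ (8*kk^2/y^2 + (kk^2/2+32)/y + 1)/τ := by
  have hτ0 : (0:ℝ) < τ := by linarith
  have h1 : 8*kk^2/(y*τ)^2 ≤ (8*kk^2/y^2)/τ := by
    rw [div_div, div_le_div_iff₀ (by positivity) (by positivity)]
    nlinarith [sq_nonneg kk, mul_pos (mul_pos hy hy) hτ0, sq_nonneg (kk*y*τ),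
      mul_nonneg (mul_nonneg (sq_nonneg kk) (sq_nonneg y)) (mul_pos hτ0 hτ0).le]
  refine h1.trans ?_
  gcongr
  have h2 : (0:ℝ) ≤ (kk^2/2+32)/y := by positivity
  linarith

lemma aux_fin2 {y τ kk : ℝ} (hy : 0 < y) (hτ1 : 1 < τ) :
    kk^2/(2*(y*τ)) + 32/(y*τ) ≤ (8*kk^2/y^2 + (kk^2/2+32)/y + 1)/τ := by
  have hτ0 : (0:ℝ) < τ := by linarith
  have key : kk^2/(2*(y*τ)) + 32/(y*τ) = ((kk^2/2+32)/y)/τ := by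
    field_simp
  rw [key]
  gcongr
  have h2 : (0:ℝ) ≤ 8*kk^2/y^2 := by positivity
  linarith

set_option maxHeartbeats 1000000 in
theorem stmt_3 (y k : ℝ) (hy : 0 < y) :
    ∃ C₀ > (0 : ℝ), ∃ τ₀ > (0 : ℝ), ∀ τ > τ₀,
      |(1 - BS k y τ) * (Real.sqrt (2 * Real.pi * τ * y) / 4)
          * Real.exp (y * τ / 8 - k / 2) - 1| ≤ C₀ / τ := by
  refine ⟨8*k^2/y^2 + (k^2/2+32)/y + 1, by positivity,
    max 1 ((4*|k|+4)/y), by positivity, ?_⟩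
  intro τ hτ
  have hτ1 : (1:ℝ) < τ := lt_of_le_of_lt (le_max_left _ _) hτ
  have hτ0 : (0:ℝ) < τ := by linarith
  have hm : 4*|k|+4 ≤ y*τ := by
    have h := lt_of_le_of_lt (le_max_right 1 ((4*|k|+4)/y)) hτ
    rw [div_lt_iff₀ hy] at h
    linarith [mul_comm τ y]
  have hm0 : 0 < y*τ := by positivity
  set s := Real.sqrt (y*τ) with hsdef
  have hs2 : s^2 = y*τ := Real.sq_sqrt hm0.le
  have hs0 : 0 < s := Real.sqrt_pos.mpr hm0
  have hsne : s ≠ 0 := hs0.ne'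
  set x₁ := s/2 - k/s with hx1def
  set x₂ := s/2 + k/s with hx2def
  have hk4 : 4*|k| + 4 ≤ s^2 := by rw [hs2]; linarith
  have hks : |k|/s ≤ s/4 := by
    rw [div_le_div_iff₀ hs0 (by norm_num : (0:ℝ) < 4)]
    have hss : s*s = s^2 := by ring
    linarith [abs_nonneg k]
  have hk1 : k/s ≤ |k|/s := by gcongr; exact le_abs_self k
  have hk2 : -(|k|/s) ≤ k/s := by
    rw [← neg_div]
    gcongr
    exact neg_abs_le k
  have hx14 : s/4 ≤ x₁ := by rw [hx1def]; linarith
  have hx24 : s/4 ≤ x₂ := by rw [hx2def]; linarith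
  have hx1 : 0 < x₁ := lt_of_lt_of_le (by positivity) hx14
  have hx2 : 0 < x₂ := lt_of_lt_of_le (by positivity) hx24
  set P := ∫ t in Ioi x₁, gau t with hP
  set Q := ∫ t in Ioi x₂, gau t with hQ
  have e1 : -k / Real.sqrt (y*τ) + Real.sqrt (y*τ)/2 = x₁ := by
    rw [hx1def, hsdef]; ring
  have e2 : -k / Real.sqrt (y*τ) - Real.sqrt (y*τ)/2 = -x₂ := by
    rw [hx2def, hsdef]; ring
  have hBS : 1 - BS k y τ = (P + Real.exp k * Q) / Real.sqrt (2*Real.pi) := by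
    simp only [BS, e1, e2]
    rw [Phi_neg x₂, ← hQ, add_div, mul_div_assoc]
    linarith [one_sub_Phi x₁]
  have hsqrt : Real.sqrt (2*Real.pi*τ*y) = Real.sqrt (2*Real.pi) * s := by
    rw [hsdef, ← Real.sqrt_mul (by positivity : (0:ℝ) ≤ 2*Real.pi)]
    congr 1; ring
  have hexp_arg : y*τ/8 - k/2 = s^2/8 - k/2 := by rw [hs2]
  set A := Real.exp (s^2/8 - k/2) with hA
  have hAp : 0 < A := Real.exp_pos _
  have hek : 0 < Real.exp k := Real.exp_pos _
  have hE : (1 - BS k y τ) * (Real.sqrt (2*Real.pi*τ*y)/4) * Real.exp (y*τ/8 - k/2)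
      = (P + Real.exp k * Q) * (s/4) * A := by
    rw [hBS, hsqrt, hexp_arg, ← hA]
    have h2pi := sqrt_two_pi_pos.ne'
    field_simp
  rw [hE]
  set u := Real.exp (-(k^2)/(2*s^2)) with hu
  have hu0 : 0 < u := Real.exp_pos _
  have hu1 : u ≤ 1 := by
    rw [hu, Real.exp_le_one_iff]
    exact div_nonpos_of_nonpos_of_nonneg (neg_nonpos.mpr (sq_nonneg k)) (by positivity)
  have hu2 : 1 - k^2/(2*s^2) ≤ u := by
    have h := Real.add_one_le_exp (-(k^2)/(2*s^2))
    rw [← hu] at h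
    have h2 : -(k^2)/(2*s^2) = -(k^2/(2*s^2)) := neg_div _ _
    linarith [h2 ▸ h]
  have hgu1 : A * gau x₁ = u := by
    rw [hA, hu, hx1def]
    unfold gau
    rw [← Real.exp_add]
    congr 1
    field_simp
    ring
  have hgu2 : A * (Real.exp k * gau x₂) = u := by
    rw [hA, hu, hx2def]
    unfold gau
    rw [← Real.exp_add, ← Real.exp_add]
    congr 1
    field_simp
    ring
  have c1 : gau x₁/x₁ * ((s/4) * A) = u * (s/(4*x₁)) := by
    rw [← hgu1]; field_simp
  have c1' : gau x₁/x₁^3 * ((s/4) * A) = u * (s/(4*x₁^3)) := by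
    rw [← hgu1]; field_simp
  have c2 : (Real.exp k * (gau x₂/x₂)) * ((s/4) * A) = u * (s/(4*x₂)) := by
    rw [← hgu2]; field_simp
  have c2' : (Real.exp k * (gau x₂/x₂^3)) * ((s/4) * A) = u * (s/(4*x₂^3)) := by
    rw [← hgu2]; field_simp
  have hP_up : P ≤ gau x₁ / x₁ := tail_upper hx1
  have hQ_up : Q ≤ gau x₂ / x₂ := tail_upper hx2
  have hP_lo : gau x₁/x₁ - gau x₁/x₁^3 ≤ P := tail_lower hx1
  have hQ_lo : gau x₂/x₂ - gau x₂/x₂^3 ≤ Q := tail_lower hx2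
  have hup : (P + Real.exp k * Q) * (s/4) * A ≤ u * (s/(4*x₁)) + u * (s/(4*x₂)) := by
    have a1 : P * ((s/4)*A) ≤ gau x₁/x₁ * ((s/4)*A) :=
      mul_le_mul_of_nonneg_right hP_up (by positivity)
    have a2 : (Real.exp k * Q) * ((s/4)*A) ≤ (Real.exp k * (gau x₂/x₂)) * ((s/4)*A) :=
      mul_le_mul_of_nonneg_right (mul_le_mul_of_nonneg_left hQ_up hek.le) (by positivity)
    calc (P + Real.exp k * Q) * (s/4) * A
        = P*((s/4)*A) + (Real.exp k * Q)*((s/4)*A) := by ring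
      _ ≤ gau x₁/x₁ * ((s/4)*A) + (Real.exp k * (gau x₂/x₂)) * ((s/4)*A) := add_le_add a1 a2
      _ = u * (s/(4*x₁)) + u * (s/(4*x₂)) := by rw [c1, c2]
  have hlo : u * (s/(4*x₁)) + u * (s/(4*x₂)) - (u * (s/(4*x₁^3)) + u * (s/(4*x₂^3)))
      ≤ (P + Real.exp k * Q) * (s/4) * A := by
    have a1 : (gau x₁/x₁ - gau x₁/x₁^3) * ((s/4)*A) ≤ P * ((s/4)*A) :=
      mul_le_mul_of_nonneg_right hP_lo (by positivity)
    have a2 : (Real.exp k * (gau x₂/x₂ - gau x₂/x₂^3)) * ((s/4)*A)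
        ≤ (Real.exp k * Q) * ((s/4)*A) :=
      mul_le_mul_of_nonneg_right (mul_le_mul_of_nonneg_left hQ_lo hek.le) (by positivity)
    have e3 : (gau x₁/x₁ - gau x₁/x₁^3) * ((s/4)*A)
        = u * (s/(4*x₁)) - u * (s/(4*x₁^3)) := by
      rw [← c1, ← c1']; ring
    have e4 : (Real.exp k * (gau x₂/x₂ - gau x₂/x₂^3)) * ((s/4)*A)
        = u * (s/(4*x₂)) - u * (s/(4*x₂^3)) := by
      rw [← c2, ← c2']; ring
    calc u * (s/(4*x₁)) + u * (s/(4*x₂)) - (u * (s/(4*x₁^3)) + u * (s/(4*x₂^3)))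
        = ((gau x₁/x₁ - gau x₁/x₁^3) * ((s/4)*A))
          + ((Real.exp k * (gau x₂/x₂ - gau x₂/x₂^3)) * ((s/4)*A)) := by
          rw [e3, e4]; ring
      _ ≤ P * ((s/4)*A) + (Real.exp k * Q)*((s/4)*A) := add_le_add a1 a2
      _ = (P + Real.exp k * Q) * (s/4) * A := by ring
  obtain ⟨hD, hs4⟩ := aux_hD hk4
  have hsum : s/(4*x₁) + s/(4*x₂) = s^4/(s^4 - 4*k^2) := by
    rw [hx1def, hx2def]
    exact aux_sum hs0 (hx1def ▸ hx1) (hx2def ▸ hx2) hD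
  have hR1 : 1 ≤ s^4/(s^4 - 4*k^2) := aux_R1 hD
  have hR2 : s^4/(s^4 - 4*k^2) - 1 ≤ 8*k^2/s^4 := aux_R2 hs0 hs4 hD
  have h1 : u * (s/(4*x₁)) + u * (s/(4*x₂)) = u * (s^4/(s^4 - 4*k^2)) := by
    rw [← hsum]; ring
  have h2 : u * (s^4/(s^4 - 4*k^2)) ≤ s^4/(s^4 - 4*k^2) :=
    mul_le_of_le_one_left (le_trans zero_le_one hR1) hu1
  have h2' : u ≤ u * (s^4/(s^4 - 4*k^2)) := le_mul_of_one_le_right hu0.le hR1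
  have h3 : u * (s/(4*x₁^3)) ≤ 16/s^2 :=
    le_trans (mul_le_of_le_one_left (by positivity) hu1) (aux_cube hs0 hx14)
  have h4 : u * (s/(4*x₂^3)) ≤ 16/s^2 :=
    le_trans (mul_le_of_le_one_left (by positivity) hu1) (aux_cube hs0 hx24)
  have hE_up : (P + Real.exp k * Q) * (s/4) * A - 1 ≤ 8*k^2/s^4 := by
    linarith [hup]
  have hE_lo : 1 - ((P + Real.exp k * Q) * (s/4) * A) ≤ k^2/(2*s^2) + 32/s^2 := by
    have q1 : u ≤ u * (s/(4*x₁)) + u * (s/(4*x₂)) := by rw [h1]; exact h2'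
    have h32 : (32:ℝ)/s^2 = 16/s^2 + 16/s^2 := by ring
    have q2 : u - 32/s^2 ≤ (P + Real.exp k * Q) * (s/4) * A := by linarith [hlo, h3, h4, h32]
    linarith [hu2]
  have hfin1 : 8*k^2/s^4 ≤ (8*k^2/y^2 + (k^2/2+32)/y + 1)/τ := by
    have hs4e : s^4 = (y*τ)^2 := by rw [← hs2]; ring
    rw [hs4e]
    exact aux_fin1 hy hτ1
  have hfin2 : k^2/(2*s^2) + 32/s^2 ≤ (8*k^2/y^2 + (k^2/2+32)/y + 1)/τ := by
    rw [hs2]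
    exact aux_fin2 hy hτ1
  rw [abs_le]
  constructor
  · linarith
  · linarith
end

section
/- Fix t > 0, ξ > 0, y₀ > 0 and set μ := log y₀ - ξ²t/2. Then for every L > 0 and k > 0, as τ → 0⁺: ∫_L^∞ BS(k, y/(τ|log τ|), τ)·ζ₁(y/(τ|log τ|)) dy = O( exp( -(1/(2ξ²t))·( log(L/(τ|log τ|)) - μ )² ) ). -/
open MeasureTheory Real

lemma gauss_int : Integrable (fun s : ℝ => Real.exp (-(s ^ 2) / 2) / Real.sqrt (2 * Real.pi)) := by
  have h : (fun s : ℝ => Real.exp (-(s ^ 2) / 2) / Real.sqrt (2 * Real.pi))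
      = fun s : ℝ => Real.exp (-(1/2 : ℝ) * s ^ 2) / Real.sqrt (2 * Real.pi) := by
    funext s; ring_nf
  rw [h]
  exact (integrable_exp_neg_mul_sq (by norm_num)).div_const _

lemma Phi_nonneg (x : ℝ) : 0 ≤ Phi x :=
  MeasureTheory.integral_nonneg (fun s => by positivity)

lemma Phi_le_one (x : ℝ) : Phi x ≤ 1 := by
  have h1 : Phi x ≤ ∫ s : ℝ, Real.exp (-(s ^ 2) / 2) / Real.sqrt (2 * Real.pi) :=
    setIntegral_le_integral gauss_int (Filter.Eventually.of_forall fun s => by positivity)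
  have h2 : (∫ s : ℝ, Real.exp (-(s ^ 2) / 2) / Real.sqrt (2 * Real.pi)) = 1 := by
    have h : (fun s : ℝ => Real.exp (-(s ^ 2) / 2) / Real.sqrt (2 * Real.pi))
        = fun s : ℝ => Real.exp (-(1/2 : ℝ) * s ^ 2) / Real.sqrt (2 * Real.pi) := by
      funext s; ring_nf
    rw [h, integral_div, integral_gaussian]
    rw [show (π / (1/2 : ℝ)) = 2 * π by ring, div_self (by positivity)]
  linarith

lemma abs_BS_le (k w T : ℝ) (hk : 0 ≤ k) : |BS k w T| ≤ Real.exp k := by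
  have h1 : (1:ℝ) ≤ Real.exp k := Real.one_le_exp hk
  have e0 : (0:ℝ) < Real.exp k := Real.exp_pos k
  unfold BS
  rw [abs_le]
  constructor
  · nlinarith [Phi_nonneg (-k / Real.sqrt (w * T) + Real.sqrt (w * T) / 2),
      Phi_le_one (-k / Real.sqrt (w * T) - Real.sqrt (w * T) / 2)]
  · nlinarith [Phi_le_one (-k / Real.sqrt (w * T) + Real.sqrt (w * T) / 2),
      Phi_nonneg (-k / Real.sqrt (w * T) - Real.sqrt (w * T) / 2)]

set_option maxHeartbeats 1000000 in
theorem stmt_10 (t ξ y0 : ℝ) (ht : 0 < t) (hξ : 0 < ξ) (hy0 : 0 < y0)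
    (L k : ℝ) (hL : 0 < L) (hk : 0 < k) :
    let μ0 : ℝ := Real.log y0 - ξ ^ 2 * t / 2
    -- the lognormal density (case `p = 1`)
    let ζ1 : ℝ → ℝ := fun y =>
      (y * ξ * Real.sqrt (2 * Real.pi * t))⁻¹
        * Real.exp (-(Real.log y - μ0) ^ 2 / (2 * ξ ^ 2 * t))
    ∃ C₀ > (0 : ℝ), ∃ τ₀ > (0 : ℝ), ∀ τ ∈ Set.Ioo (0 : ℝ) τ₀,
      |∫ y in Set.Ioi L, BS k (y / (τ * |Real.log τ|)) τ * ζ1 (y / (τ * |Real.log τ|))|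
        ≤ C₀ * Real.exp (-(1 / (2 * ξ ^ 2 * t))
            * (Real.log (L / (τ * |Real.log τ|)) - μ0) ^ 2) := by
  intro μ0 ζ1
  have hπt : (0:ℝ) < Real.sqrt (2 * π * t) := Real.sqrt_pos.mpr (by positivity)
  set D : ℝ := (ξ * Real.sqrt (2 * π * t))⁻¹ with hD
  have hD0 : 0 < D := by positivity
  refine ⟨Real.exp k * D + 1, by positivity,
    min (1/2) (Real.exp (2 * (Real.log L - μ0 - Real.log 2 - ξ^2*t))), by positivity, ?_⟩
  rintro τ ⟨hτ0, hτub⟩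
  have hτ1 : τ < 1 := by
    have := lt_of_lt_of_le hτub (min_le_left _ _); linarith
  have hlogτ : Real.log τ < 0 := Real.log_neg hτ0 hτ1
  have habs : |Real.log τ| = -Real.log τ := abs_of_neg hlogτ
  set c : ℝ := τ * |Real.log τ| with hc_def
  have hc0 : 0 < c := mul_pos hτ0 (abs_pos.mpr (ne_of_lt hlogτ))
  -- c ≤ 1
  have hinv : -Real.log τ ≤ τ⁻¹ - 1 := by
    have := Real.log_le_sub_one_of_pos (show (0:ℝ) < τ⁻¹ by positivity)
    rwa [Real.log_inv] at this
  have hc1 : c ≤ 1 := by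
    rw [hc_def, habs]
    calc τ * -Real.log τ ≤ τ * τ⁻¹ := by
          apply mul_le_mul_of_nonneg_left _ hτ0.le
          nlinarith [inv_pos.mpr hτ0]
      _ = 1 := mul_inv_cancel₀ (ne_of_gt hτ0)
  -- c ≤ 2 √τ
  have hsτ : (0:ℝ) < Real.sqrt τ := Real.sqrt_pos.mpr hτ0
  have hinv2 : -Real.log (Real.sqrt τ) ≤ (Real.sqrt τ)⁻¹ := by
    have := Real.log_le_sub_one_of_pos (show (0:ℝ) < (Real.sqrt τ)⁻¹ by positivity)
    rw [Real.log_inv] at this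
    linarith [inv_pos.mpr hsτ]
  have hc2 : c ≤ 2 * Real.sqrt τ := by
    have hls : Real.log (Real.sqrt τ) = Real.log τ / 2 := Real.log_sqrt hτ0.le
    have hττ : τ = Real.sqrt τ * Real.sqrt τ := (Real.mul_self_sqrt hτ0.le).symm
    rw [hc_def, habs]
    calc τ * -Real.log τ = Real.sqrt τ * Real.sqrt τ * (2 * -Real.log (Real.sqrt τ)) := by
          rw [hls]; linear_combination (-Real.log τ) * hττ
      _ ≤ Real.sqrt τ * Real.sqrt τ * (2 * (Real.sqrt τ)⁻¹) := by
          apply mul_le_mul_of_nonneg_left _ (by positivity)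
          linarith
      _ = 2 * Real.sqrt τ := by
          field_simp
  have hlogc : Real.log c ≤ Real.log 2 + Real.log τ / 2 := by
    calc Real.log c ≤ Real.log (2 * Real.sqrt τ) := Real.log_le_log hc0 hc2
      _ = Real.log 2 + Real.log τ / 2 := by
          rw [Real.log_mul (by norm_num) (ne_of_gt hsτ), Real.log_sqrt hτ0.le]
  -- a ≥ ξ²t
  have hlogτR : Real.log τ < 2 * (Real.log L - μ0 - Real.log 2 - ξ^2*t) := by
    have h := lt_of_lt_of_le hτub (min_le_right _ _)
    have := Real.log_lt_log hτ0 h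
    rwa [Real.log_exp] at this
  set a : ℝ := Real.log (L / c) - μ0 with ha_def
  have hLc : Real.log (L / c) = Real.log L - Real.log c :=
    Real.log_div (ne_of_gt hL) (ne_of_gt hc0)
  have ha : ξ^2 * t ≤ a := by rw [ha_def, hLc]; nlinarith
  have hξt : (0:ℝ) < ξ^2 * t := by positivity
  have ha0 : 0 < a := lt_of_lt_of_le hξt ha
  set β : ℝ := a / (ξ^2 * t) with hβ_def
  have hβ1 : 1 ≤ β := (one_le_div hξt).mpr ha
  have hβ0 : 0 < β := lt_of_lt_of_le one_pos hβ1
  set E : ℝ := Real.exp (-(1 / (2 * ξ ^ 2 * t)) * a ^ 2) with hE_def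
  have hE0 : 0 < E := Real.exp_pos _
  set K : ℝ := Real.exp k * (c * D * (E * L ^ β)) with hK_def
  have hK0 : 0 < K := by positivity
  have hint : IntegrableOn (fun y : ℝ => K * y ^ (-1 - β)) (Set.Ioi L) :=
    (integrableOn_Ioi_rpow_of_lt (by linarith) hL).const_mul K
  -- pointwise bound
  have hpt : ∀ y ∈ Set.Ioi L,
      ‖BS k (y / c) τ * ζ1 (y / c)‖ ≤ K * y ^ (-1 - β) := by
    intro y hy
    rw [Set.mem_Ioi] at hy
    have hy0' : 0 < y := lt_trans hL hy
    have hζpos : 0 ≤ ζ1 (y / c) := by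
      simp only [ζ1]; positivity
    have hBS : |BS k (y / c) τ| ≤ Real.exp k := abs_BS_le _ _ _ hk.le
    have hlogy : Real.log (y / c) = Real.log y - Real.log c :=
      Real.log_div (ne_of_gt hy0') (ne_of_gt hc0)
    have hLy : Real.log L ≤ Real.log y := Real.log_le_log hL hy.le
    -- exponent inequality
    have hexp : -(Real.log (y / c) - μ0) ^ 2 / (2 * ξ ^ 2 * t)
        ≤ -(1 / (2 * ξ ^ 2 * t)) * a ^ 2 + β * (Real.log L - Real.log y) := by
      set x : ℝ := Real.log (y / c) - μ0 with hx_def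
      have hLy' : Real.log L - Real.log y = a - x := by
        rw [hx_def, ha_def, hLc, hlogy]; ring
      rw [hLy', hβ_def]
      have h2s : (0:ℝ) < 2 * ξ ^ 2 * t := by positivity
      have key : -(1 / (2 * ξ ^ 2 * t)) * a ^ 2 + a / (ξ^2 * t) * (a - x)
          - (-x ^ 2 / (2 * ξ ^ 2 * t)) = (x - a)^2 / (2 * ξ^2 * t) := by
        field_simp; ring
      have hnn : 0 ≤ (x - a)^2 / (2 * ξ^2 * t) := by positivity
      linarith
    have hζeq : ζ1 (y / c) = c * y⁻¹ * D
        * Real.exp (-(Real.log (y / c) - μ0) ^ 2 / (2 * ξ ^ 2 * t)) := by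
      simp only [ζ1, hD]
      rw [show (y / c * ξ * Real.sqrt (2 * π * t))⁻¹
          = c * y⁻¹ * (ξ * Real.sqrt (2 * π * t))⁻¹ by
        field_simp]
    have hexp2 : Real.exp (-(Real.log (y / c) - μ0) ^ 2 / (2 * ξ ^ 2 * t))
        ≤ E * (L ^ β * y ^ (-β)) := by
      have h1 := Real.exp_le_exp.mpr hexp
      rw [Real.exp_add] at h1
      have h2 : Real.exp (β * (Real.log L - Real.log y)) = L ^ β * y ^ (-β) := by
        rw [show β * (Real.log L - Real.log y) = Real.log L * β + Real.log y * (-β) by ring,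
          Real.exp_add, ← Real.rpow_def_of_pos hL, ← Real.rpow_def_of_pos hy0']
      rw [h2] at h1
      exact h1
    calc ‖BS k (y / c) τ * ζ1 (y / c)‖ = |BS k (y / c) τ| * ζ1 (y / c) := by
          rw [Real.norm_eq_abs, abs_mul, abs_of_nonneg hζpos]
      _ ≤ Real.exp k * (c * y⁻¹ * D * (E * (L ^ β * y ^ (-β)))) := by
          rw [hζeq]
          exact mul_le_mul hBS (mul_le_mul_of_nonneg_left hexp2 (by positivity))
            (by positivity) (Real.exp_pos k).le
      _ = (Real.exp k * (c * D * (E * L ^ β))) * (y⁻¹ * y ^ (-β)) := by ring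
      _ = K * y ^ (-1 - β) := by
          rw [hK_def]
          congr 1
          rw [show y⁻¹ = y ^ (-1:ℝ) from (Real.rpow_neg_one y).symm, ← Real.rpow_add hy0',
            show (-1 + -β : ℝ) = -1 - β by ring]
  have hae : ∀ᵐ y ∂(volume.restrict (Set.Ioi L)),
      ‖BS k (y / c) τ * ζ1 (y / c)‖ ≤ K * y ^ (-1 - β) := by
    filter_upwards [ae_restrict_mem measurableSet_Ioi] with y hy using hpt y hy
  have hbound := norm_integral_le_of_norm_le hint hae
  rw [Real.norm_eq_abs] at hbound
  have hIg : (∫ y in Set.Ioi L, K * y ^ (-1 - β)) = K * (L ^ (-β) / β) := by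
    rw [MeasureTheory.integral_const_mul, integral_Ioi_rpow_of_lt (by linarith) hL,
      show (-1 - β + 1) = -β by ring]
    rw [neg_div_neg_eq]
  have hLββ : L ^ β * L ^ (-β) = 1 := by
    rw [← Real.rpow_add hL, add_neg_cancel, Real.rpow_zero]
  have hfin : K * (L ^ (-β) / β) ≤ (Real.exp k * D + 1) * E := by
    have h1 : K * (L ^ (-β) / β)
        = Real.exp k * D * E * ((L ^ β * L ^ (-β)) * (c / β)) := by
      rw [hK_def]; ring
    rw [h1, hLββ, one_mul]
    have hcβ : c / β ≤ 1 := (div_le_one hβ0).mpr (le_trans hc1 hβ1)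
    calc Real.exp k * D * E * (c / β) ≤ Real.exp k * D * E * 1 := by
          apply mul_le_mul_of_nonneg_left hcβ (by positivity)
      _ ≤ (Real.exp k * D + 1) * E := by nlinarith [Real.exp_pos k]
  calc |∫ y in Set.Ioi L, BS k (y / c) τ * ζ1 (y / c)|
      ≤ ∫ y in Set.Ioi L, K * y ^ (-1 - β) := hbound
    _ = K * (L ^ (-β) / β) := hIg
    _ ≤ (Real.exp k * D + 1) * E := hfin
end
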